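/- There exist a constant integer β_in ≥ 1 and a constant real δ_in > 0 such that for all sufficiently large integers t there exist maps Enc : {0,1}^t → {0,1}^{β_in·t} and Dec : {0,1}^* → {0,1}^t ∪ {⊥} with the following properties: (1) for every x ∈ {0,1}^t and every binary string w with ED(w, Enc(x)) ≤ δ_in·2·β_in·t, one has Dec(w) = x (equivalently, for all distinct x, x' ∈ {0,1}^t, ED(Enc(x), Enc(x')) > 4·δ_in·β_in·t); and (2) for every x ∈ {0,1}^t, every contiguous substring of Enc(x) of length ⌈2·log₂ t⌉ has fractional Hamming weight at least 2/5 (i.e., at least a 2/5-fraction of its bits equal 1). -/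

import Mathlib

/-- Cost structure for Levenshtein distance (removed from Mathlib; restored with its old meaning). -/
structure Levenshtein.Cost (α β δ : Type*) where
  delete : α → δ
  insert : β → δ
  substitute : α → β → δ

/-- Levenshtein distance with cost `C` (removed from Mathlib; restored with its old meaning,
given by the same recursion the old `levenshtein_cons_cons` etc. lemmas characterized). -/
def levenshtein {α β δ : Type*} [AddZeroClass δ] [Min δ] (C : Levenshtein.Cost α β δ) :
    List α → List β → δ
  | [], [] => 0
  | x :: xs, [] => C.delete x + levenshtein C xs []
  | [], y :: ys => C.insert y + levenshtein C [] ys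
  | x :: xs, y :: ys =>
    min (C.delete x + levenshtein C xs (y :: ys))
      (min (C.insert y + levenshtein C (x :: xs) ys) (C.substitute x y + levenshtein C xs ys))

theorem levenshtein_nil_nil {α β δ : Type*} [AddZeroClass δ] [Min δ] (C : Levenshtein.Cost α β δ) :
    levenshtein C [] [] = 0 := by rw [levenshtein]

theorem levenshtein_nil_cons {α β δ : Type*} [AddZeroClass δ] [Min δ] (C : Levenshtein.Cost α β δ)
    (y : β) (ys : List β) :
    levenshtein C [] (y :: ys) = C.insert y + levenshtein C [] ys := by rw [levenshtein]

theorem levenshtein_cons_nil {α β δ : Type*} [AddZeroClass δ] [Min δ] (C : Levenshtein.Cost α β δ)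
    (x : α) (xs : List α) :
    levenshtein C (x :: xs) [] = C.delete x + levenshtein C xs [] := by rw [levenshtein]

theorem levenshtein_cons_cons {α β δ : Type*} [AddZeroClass δ] [Min δ] (C : Levenshtein.Cost α β δ)
    (x : α) (xs : List α) (y : β) (ys : List β) :
    levenshtein C (x :: xs) (y :: ys) =
      min (C.delete x + levenshtein C xs (y :: ys))
        (min (C.insert y + levenshtein C (x :: xs) ys) (C.substitute x y + levenshtein C xs ys)) := by
  rw [levenshtein]

/-- The insertion-deletion edit distance between two lists: the Levenshtein
distance where insertions and deletions cost `1` and substitutions cost `2`. -/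
def insDelCost (α : Type*) [DecidableEq α] : Levenshtein.Cost α α ℕ where
  delete _ := 1
  insert _ := 1
  substitute a b := if a = b then 0 else 2

/-- `ED x y` is the minimum number of single-symbol insertions and deletions
needed to transform `x` into `y`. -/
def ED {A : Type*} [DecidableEq A] (x y : List A) : ℕ :=
  levenshtein (insDelCost A) x y

namespace SZaux

open List

theorem ED_nil_left (u : List Bool) : ED [] u = u.length := by
  induction u with
  | nil => simp [ED, levenshtein_nil_nil]
  | cons y ys ih =>
    rw [ED, levenshtein_nil_cons]
    show (insDelCost Bool).insert y + ED [] ys = _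
    rw [ih]; simp [insDelCost]; omega

theorem ED_nil_right (u : List Bool) : ED u [] = u.length := by
  induction u with
  | nil => simp [ED, levenshtein_nil_nil]
  | cons y ys ih =>
    rw [ED, levenshtein_cons_nil]
    show (insDelCost Bool).delete y + ED ys [] = _
    rw [ih]; simp [insDelCost]; omega

theorem ED_self (u : List Bool) : ED u u = 0 := by
  induction u with
  | nil => simp [ED, levenshtein_nil_nil]
  | cons a u ih =>
    have h : ED (a :: u) (a :: u) ≤ 0 := by
      rw [ED, levenshtein_cons_cons]
      refine le_trans (min_le_right _ _) (le_trans (min_le_right _ _) ?_)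
      simp [insDelCost, ED] at ih ⊢
      exact ih
    omega

/-- From a small edit distance, extract a long common sublist. -/
theorem exists_common_sublist : ∀ (w u : List Bool),
    ∃ c : List Bool, c <+ w ∧ c <+ u ∧ w.length + u.length ≤ 2 * c.length + ED w u := by
  intro w
  induction w with
  | nil =>
    intro u
    exact ⟨[], nil_sublist _, nil_sublist _, by simp [ED_nil_left]⟩
  | cons x xs ihx =>
    intro u
    induction u with
    | nil =>
      refine ⟨[], nil_sublist _, nil_sublist _, by simp [ED_nil_right]⟩
    | cons y ys ihy =>
      have hmin : ED (x :: xs) (y :: ys) =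
          min (1 + ED xs (y :: ys))
            (min (1 + ED (x :: xs) ys) ((if x = y then 0 else 2) + ED xs ys)) := by
        simp [ED, levenshtein_cons_cons, insDelCost]
      rcases min_choice (1 + ED xs (y :: ys))
        (min (1 + ED (x :: xs) ys) ((if x = y then 0 else 2) + ED xs ys)) with h1 | h1
      · obtain ⟨c, hcw, hcu, hlen⟩ := ihx (y :: ys)
        refine ⟨c, hcw.cons x, hcu, ?_⟩
        rw [hmin, h1]
        simp only [length_cons] at *
        omega
      · rcases min_choice (1 + ED (x :: xs) ys) ((if x = y then 0 else 2) + ED xs ys) with h2 | h2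
        · obtain ⟨c, hcw, hcu, hlen⟩ := ihy
          refine ⟨c, hcw, hcu.cons y, ?_⟩
          rw [hmin, h1, h2]
          simp only [length_cons] at *
          omega
        · by_cases hxy : x = y
          · subst hxy
            obtain ⟨c, hcw, hcu, hlen⟩ := ihx ys
            refine ⟨x :: c, hcw.cons₂ x, hcu.cons₂ x, ?_⟩
            rw [hmin, h1, h2]
            simp only [length_cons, if_pos rfl] at *
            omega
          · obtain ⟨c, hcw, hcu, hlen⟩ := ihx ys
            refine ⟨c, hcw.cons x, hcu.cons y, ?_⟩
            rw [hmin, h1, h2]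
            simp only [length_cons, if_neg hxy] at *
            omega

/-- Two sublists of a common list have a long common sublist. -/
theorem exists_common_of_sublists : ∀ (w c d : List Bool), c <+ w → d <+ w →
    ∃ e : List Bool, e <+ c ∧ e <+ d ∧ c.length + d.length ≤ w.length + e.length := by
  intro w
  induction w with
  | nil =>
    intro c d hc hd
    rw [sublist_nil] at hc hd
    subst hc; subst hd
    exact ⟨[], Sublist.refl _, Sublist.refl _, by simp⟩
  | cons a w' ih =>
    intro c d hc hd
    rcases sublist_cons_iff.1 hc with hc' | ⟨c', rfl, hc'⟩ <;>
      rcases sublist_cons_iff.1 hd with hd' | ⟨d', rfl, hd'⟩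
    · obtain ⟨e, h1, h2, h3⟩ := ih c d hc' hd'
      exact ⟨e, h1, h2, by simp only [length_cons]; omega⟩
    · obtain ⟨e, h1, h2, h3⟩ := ih c d' hc' hd'
      exact ⟨e, h1, h2.cons a, by simp only [length_cons] at *; omega⟩
    · obtain ⟨e, h1, h2, h3⟩ := ih c' d hc' hd'
      exact ⟨e, h1.cons a, h2, by simp only [length_cons] at *; omega⟩
    · obtain ⟨e, h1, h2, h3⟩ := ih c' d' hc' hd'
      exact ⟨a :: e, h1.cons₂ a, h2.cons₂ a, by simp only [length_cons] at *; omega⟩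

end SZaux


namespace SZaux2
open List

/-- Keep the elements of `u` where the mask is `true`. -/
def maskFilter : List Bool → List Bool → List Bool
  | [], _ => []
  | _ :: _, [] => []
  | b :: m, a :: u => if b then a :: maskFilter m u else maskFilter m u

theorem sublist_exists_mask {e u : List Bool} (h : e <+ u) :
    ∃ m : List Bool, m.length = u.length ∧ m.count false + e.length = u.length ∧
      maskFilter m u = e := by
  induction h with
  | slnil => exact ⟨[], rfl, rfl, rfl⟩
  | @cons l₁ l₂ a h ih =>
    obtain ⟨m, h1, h2, h3⟩ := ih
    exact ⟨false :: m, by simp [h1], by simp [count_cons] at *; omega, by simp [maskFilter, h3]⟩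
  | @cons_cons l₁ l₂ a h ih =>
    obtain ⟨m, h1, h2, h3⟩ := ih
    exact ⟨true :: m, by simp [h1], by simp [count_cons] at *; omega, by simp [maskFilter, h3]⟩

/-- Merge a base list `e` with inserted symbols `ins`, as indicated by a mask. -/
def mergeIns : List Bool → List Bool → List Bool → List Bool
  | [], _, _ => []
  | true :: m, [], _ => []
  | true :: m, a :: e, ins => a :: mergeIns m e ins
  | false :: m, _, [] => []
  | false :: m, e, c :: ins => c :: mergeIns m e ins

theorem sublist_exists_merge {e v : List Bool} (h : e <+ v) :
    ∃ m ins : List Bool, m.length = v.length ∧ ins.length = m.count false ∧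
      m.count false + e.length = v.length ∧ mergeIns m e ins = v := by
  induction h with
  | slnil => exact ⟨[], [], rfl, rfl, rfl, rfl⟩
  | @cons l₁ l₂ a h ih =>
    obtain ⟨m, ins, h1, h2, h2', h3⟩ := ih
    exact ⟨false :: m, a :: ins, by simp [h1], by simp [count_cons, h2],
      by simp [count_cons] at *; omega, by simp [mergeIns, h3]⟩
  | @cons_cons l₁ l₂ a h ih =>
    obtain ⟨m, ins, h1, h2, h2', h3⟩ := ih
    exact ⟨true :: m, ins, by simp [h1], by simp [count_cons, h2],
      by simp [count_cons] at *; omega, by simp [mergeIns, h3]⟩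

theorem mergeIns_append : ∀ (m e ins r : List Bool), m.count false ≤ ins.length →
    mergeIns m e (ins ++ r) = mergeIns m e ins := by
  intro m
  induction m with
  | nil => intros; rfl
  | cons b m ih =>
    intro e ins r h
    cases b
    · cases ins with
      | nil => simp [count_cons] at h
      | cons c ins' =>
        simp only [cons_append, mergeIns, List.append_eq]
        rw [ih]
        simp [count_cons] at h ⊢
        omega
    · cases e with
      | nil => rfl
      | cons a e' =>
        simp only [mergeIns]
        rw [ih]
        simp [count_cons] at h ⊢
        omega

/-- The dense encoding: each bit `b` becomes the pair `[true, b]`. -/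
def encBlocks : List Bool → List Bool
  | [] => []
  | b :: y => true :: b :: encBlocks y

theorem encBlocks_length (y : List Bool) : (encBlocks y).length = 2 * y.length := by
  induction y with
  | nil => rfl
  | cons b y ih => simp [encBlocks, ih]; omega

theorem encBlocks_injective : Function.Injective encBlocks := by
  intro a
  induction a with
  | nil => intro b hb; cases b with
    | nil => rfl
    | cons c y => simp [encBlocks] at hb
  | cons c y ih =>
    intro b hb
    cases b with
    | nil => simp [encBlocks] at hb
    | cons d z =>
      simp only [encBlocks, cons.injEq, true_and] at hb
      exact by rw [hb.1, ih hb.2]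

theorem chain'_cons_encBlocks (y : List Bool) (b : Bool) :
    Chain' (fun a b => a = true ∨ b = true) (b :: encBlocks y) := by
  induction y generalizing b with
  | nil => simp [encBlocks, Chain']
  | cons c y ih =>
    simp only [encBlocks, Chain', isChain_cons_cons]
    refine ⟨by simp, by simp, ih c⟩

theorem chain'_encBlocks (y : List Bool) :
    Chain' (fun a b => a = true ∨ b = true) (encBlocks y) := by
  cases y with
  | nil => simp [encBlocks, Chain']
  | cons b y =>
    simp only [encBlocks, Chain', isChain_cons_cons]
    exact ⟨by simp, chain'_cons_encBlocks y b⟩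

theorem chain'_count (l : List Bool) (h : Chain' (fun a b => a = true ∨ b = true) l) :
    l.length ≤ 2 * l.count true + 1 ∧
      (l.head? = some true → l.length ≤ 2 * l.count true) := by
  induction l with
  | nil => simp
  | cons a tl ih =>
    have h1 := ih h.tail
    cases a
    · refine ⟨?_, by simp⟩
      cases tl with
      | nil => simp
      | cons b rest =>
        have hb : b = true := by
          have := (isChain_cons_cons.1 h).1
          simpa using this
        subst hb
        have h2 := h1.2 rfl
        simp [count_cons] at h2 ⊢
        omega
    · have h2 := h1.1
      constructor
      · simp [count_cons] at h2 ⊢; omega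
      · intro _
        simp [count_cons] at h2 ⊢; omega

end SZaux2


namespace SZaux3
open List Finset

/-- The finset of all boolean lists of length `n`. -/
def listsLen (n : ℕ) : Finset (List Bool) :=
  (Finset.univ : Finset (Fin n → Bool)).image List.ofFn

theorem mem_listsLen {n : ℕ} {l : List Bool} (h : l.length = n) : l ∈ listsLen n := by
  subst h
  exact Finset.mem_image.2 ⟨l.get, Finset.mem_univ _, List.ofFn_get l⟩

theorem length_of_mem_listsLen {n : ℕ} {l : List Bool} (h : l ∈ listsLen n) : l.length = n := by
  obtain ⟨f, -, rfl⟩ := Finset.mem_image.1 h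
  simp

theorem card_listsLen (n : ℕ) : (listsLen n).card = 2 ^ n := by
  rw [listsLen, Finset.card_image_of_injective _ List.ofFn_injective, Finset.card_univ]
  simp

theorem count_ofFn (b : Bool) : ∀ (n : ℕ) (f : Fin n → Bool),
    (List.ofFn f).count b = (Finset.univ.filter (fun i => f i = b)).card := by
  intro n
  induction n with
  | zero => intro f; simp
  | succ n ih =>
    intro f
    rw [List.ofFn_succ, List.count_cons, ih, Finset.card_filter, Finset.card_filter,
      Fin.sum_univ_succ]
    simp [add_comm]

/-- Boolean lists of length `n` with at most `D` `false` entries. -/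
def maskFinset (n D : ℕ) : Finset (List Bool) :=
  (listsLen n).filter (fun m => m.count false ≤ D)

theorem mem_maskFinset {n D : ℕ} {m : List Bool} :
    m ∈ maskFinset n D ↔ m.length = n ∧ m.count false ≤ D := by
  rw [maskFinset, Finset.mem_filter]
  constructor
  · exact fun h => ⟨length_of_mem_listsLen h.1, h.2⟩
  · exact fun h => ⟨mem_listsLen h.1, h.2⟩

theorem card_maskFinset (n D : ℕ) :
    (maskFinset n D).card ≤ ∑ j ∈ Finset.range (D + 1), n.choose j := by
  classical
  have h1 : maskFinset n D =
      ((Finset.univ : Finset (Fin n → Bool)).filter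
        (fun f => (List.ofFn f).count false ≤ D)).image List.ofFn := by
    rw [maskFinset, listsLen, Finset.filter_image]
  rw [h1, Finset.card_image_of_injective _ List.ofFn_injective]
  have h2 : ∀ f : Fin n → Bool, (List.ofFn f).count false =
      (Finset.univ.filter (fun i => f i = false)).card := fun f => count_ofFn false n f
  calc ((Finset.univ : Finset (Fin n → Bool)).filter
        (fun f => (List.ofFn f).count false ≤ D)).card
      ≤ ((Finset.range (D+1)).biUnion
          (fun j => Finset.powersetCard j (Finset.univ : Finset (Fin n)))).card := by
        apply Finset.card_le_card_of_injOn
          (fun f => Finset.univ.filter (fun i => f i = false))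
        · intro f hf
          simp only [Finset.coe_filter, Set.mem_setOf_eq, Finset.mem_filter, Finset.mem_univ, true_and] at hf
          rw [h2 f] at hf
          exact Finset.mem_biUnion.2 ⟨_, Finset.mem_range.2 (Nat.lt_succ_of_le hf),
            Finset.mem_powersetCard.2 ⟨Finset.subset_univ _, rfl⟩⟩
        · intro f _ g _ hfg
          funext i
          have hfg' : Finset.univ.filter (fun i => f i = false) =
              Finset.univ.filter (fun i => g i = false) := hfg
          have : (i ∈ Finset.univ.filter (fun i => f i = false)) ↔
              (i ∈ Finset.univ.filter (fun i => g i = false)) := by rw [hfg']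
          simp only [Finset.mem_filter, Finset.mem_univ, true_and] at this
          cases hfi : f i <;> cases hgi : g i <;> simp_all
    _ ≤ ∑ j ∈ Finset.range (D + 1),
          (Finset.powersetCard j (Finset.univ : Finset (Fin n))).card :=
        Finset.card_biUnion_le
    _ = ∑ j ∈ Finset.range (D + 1), n.choose j := by
        simp [Finset.card_powersetCard]

theorem sum_choose_bound (n D M : ℕ) (hD : D ≤ n) (hM : 1 ≤ M) :
    (∑ j ∈ Finset.range (D + 1), n.choose j) * M ^ (n - D) ≤ (M + 1) ^ n := by
  calc (∑ j ∈ Finset.range (D + 1), n.choose j) * M ^ (n - D)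
      = ∑ j ∈ Finset.range (D + 1), n.choose j * M ^ (n - D) := by
        rw [Finset.sum_mul]
    _ ≤ ∑ j ∈ Finset.range (D + 1), n.choose j * M ^ (n - j) := by
        apply Finset.sum_le_sum
        intro j hj
        have : j ≤ D := Nat.lt_succ_iff.1 (Finset.mem_range.1 hj)
        exact Nat.mul_le_mul_left _ (Nat.pow_le_pow_right hM (by omega))
    _ = ∑ j ∈ Finset.range (D + 1), n.choose (n - j) * M ^ (n - j) := by
        apply Finset.sum_congr rfl
        intro j hj
        have hjD : j ≤ D := Nat.lt_succ_iff.1 (Finset.mem_range.1 hj)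
        rw [Nat.choose_symm (by omega)]
    _ = ∑ k ∈ (Finset.range (D + 1)).image (fun j => n - j), n.choose k * M ^ k := by
        rw [Finset.sum_image]
        intro a ha b hb hab
        have haD : a ≤ D := Nat.lt_succ_iff.1 (Finset.mem_range.1 ha)
        have hbD : b ≤ D := Nat.lt_succ_iff.1 (Finset.mem_range.1 hb)
        beta_reduce at hab
        omega
    _ ≤ ∑ k ∈ Finset.range (n + 1), n.choose k * M ^ k := by
        apply Finset.sum_le_sum_of_subset
        intro k hk
        simp only [Finset.mem_image, Finset.mem_range] at hk ⊢
        omega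
    _ = (M + 1) ^ n := by
        rw [add_pow]
        apply Finset.sum_congr rfl
        intro k _
        simp [mul_comm]

theorem greedy (R : List Bool → List Bool → Prop) [∀ u, DecidablePred (R u)]
    (hsymm : ∀ u v, R u v → R v u) (hrefl : ∀ u, R u u) (Δ : ℕ) (hΔ : 1 ≤ Δ) :
    ∀ (k : ℕ) (S : Finset (List Bool)), (∀ u ∈ S, (S.filter (R u)).card ≤ Δ) →
      k * Δ ≤ S.card →
      ∃ T ⊆ S, T.card = k ∧ ∀ u ∈ T, ∀ v ∈ T, u ≠ v → ¬ R u v := by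
  intro k
  induction k with
  | zero => intro S _ _; exact ⟨∅, Finset.empty_subset _, Finset.card_empty, by simp⟩
  | succ k IH =>
    intro S hb hcard
    have hmul : (k + 1) * Δ = k * Δ + Δ := by ring
    have hS : 0 < S.card := by omega
    obtain ⟨u₀, hu₀⟩ := Finset.card_pos.1 hS
    set S' := S.filter (fun v => ¬ R u₀ v) with hS'
    have hsplit : (S.filter (R u₀)).card + S'.card = S.card :=
      Finset.card_filter_add_card_filter_not _
    have hcard' : k * Δ ≤ S'.card := by
      have := hb u₀ hu₀
      omega
    have hb' : ∀ u ∈ S', (S'.filter (R u)).card ≤ Δ := by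
      intro u hu
      refine le_trans (Finset.card_le_card ?_) (hb u (Finset.filter_subset _ _ hu))
      exact Finset.filter_subset_filter _ (Finset.filter_subset _ _)
    obtain ⟨T', hT'sub, hT'card, hT'pair⟩ := IH S' hb' hcard'
    have hT'S : T' ⊆ S := hT'sub.trans (Finset.filter_subset _ _)
    have hu₀T' : u₀ ∉ T' := by
      intro hmem
      have := hT'sub hmem
      rw [hS', Finset.mem_filter] at this
      exact this.2 (hrefl u₀)
    refine ⟨insert u₀ T', ?_, ?_, ?_⟩
    · exact Finset.insert_subset hu₀ hT'S
    · rw [Finset.card_insert_of_notMem hu₀T', hT'card]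
    · intro u hu v hv hne
      rcases Finset.mem_insert.1 hu with rfl | hu' <;>
        rcases Finset.mem_insert.1 hv with rfl | hv'
      · exact absurd rfl hne
      · have := hT'sub hv'
        rw [hS', Finset.mem_filter] at this
        exact this.2
      · intro hR
        have := hT'sub hu'
        rw [hS', Finset.mem_filter] at this
        exact this.2 (hsymm _ _ hR)
      · exact hT'pair u hu' v hv' hne

end SZaux3


namespace SZaux4

theorem numeric (t : ℕ) (ht : 1 ≤ t) :
    ((2 ^ 30 + 1 : ℕ) ^ (4 * t)) ^ 2 * 2 ^ (t / 2 ^ 28) ≤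
      2 ^ t * ((2 ^ 30 : ℕ) ^ (4 * t - t / 2 ^ 28)) ^ 2 := by
  set D := t / 2 ^ 28 with hDdef
  have hD : 2 ^ 28 * D ≤ t := by
    rw [hDdef, mul_comm]
    exact Nat.div_mul_le_self t _
  have h122 : 122 * D ≤ t := by
    have h1 : 122 * D ≤ 2 ^ 28 * D := Nat.mul_le_mul_right D (by norm_num)
    omega
  have h61 : 61 * D ≤ t := by omega
  have hDt : D ≤ t := by omega
  rw [← Nat.cast_le (α := ℝ)]
  push_cast
  have hx : ((2 : ℝ) ^ 30 + 1) = 2 ^ 30 * (1 + ((2 : ℝ) ^ 30)⁻¹) := by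
    field_simp
  have hinvpos : (0 : ℝ) < ((2 : ℝ) ^ 30)⁻¹ := by positivity
  have main : (1 + ((2 : ℝ) ^ 30)⁻¹) ^ (4 * t * 2) ≤ (2 : ℝ) ^ (t - 61 * D) := by
    have step1 : (1 + ((2 : ℝ) ^ 30)⁻¹) ≤ Real.exp (((2 : ℝ) ^ 30)⁻¹) := by
      have := Real.add_one_le_exp (((2 : ℝ) ^ 30)⁻¹)
      linarith
    have step2 : (1 + ((2 : ℝ) ^ 30)⁻¹) ^ (4 * t * 2) ≤
        Real.exp (((2 : ℝ) ^ 30)⁻¹) ^ (4 * t * 2) :=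
      pow_le_pow_left₀ (by positivity) step1 _
    have step3 : Real.exp (((2 : ℝ) ^ 30)⁻¹) ^ (4 * t * 2) =
        Real.exp ((4 * t * 2 : ℕ) * ((2 : ℝ) ^ 30)⁻¹) := by
      rw [Real.exp_nat_mul]
    have step4 : (2 : ℝ) ^ (t - 61 * D) =
        Real.exp ((t - 61 * D : ℕ) * Real.log 2) := by
      rw [Real.exp_nat_mul, Real.exp_log (by norm_num : (0:ℝ) < 2)]
    rw [step4]
    refine le_trans step2 (le_trans (le_of_eq step3) (Real.exp_le_exp.2 ?_))
    have hlog : (1:ℝ)/2 ≤ Real.log 2 := by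
      have := Real.log_two_gt_d9
      linarith
    have hcast : ((t - 61 * D : ℕ) : ℝ) = (t : ℝ) - 61 * D := by
      push_cast [Nat.cast_sub h61]
      ring
    have htD : (t : ℝ) / 2 ≤ (t : ℝ) - 61 * (D : ℝ) := by
      have : (122 * D : ℝ) ≤ t := by exact_mod_cast h122
      linarith
    have hlhs : ((4 * t * 2 : ℕ) : ℝ) * ((2 : ℝ) ^ 30)⁻¹ ≤ (t : ℝ) / 4 := by
      push_cast
      rw [show (4 * (t:ℝ) * 2) * ((2 : ℝ) ^ 30)⁻¹ = (t : ℝ) * (8 / 2 ^ 30) by ring]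
      have htpos : (0:ℝ) ≤ t := by positivity
      nlinarith
    have hrhs : (t : ℝ) / 4 ≤ ((t - 61 * D : ℕ) : ℝ) * Real.log 2 := by
      rw [hcast]
      have h1 : (t : ℝ) / 2 * (1 / 2) ≤ ((t : ℝ) - 61 * D) * Real.log 2 := by
        apply mul_le_mul htD hlog (by norm_num)
        have : (122 * D : ℝ) ≤ t := by exact_mod_cast h122
        have hDpos : (0:ℝ) ≤ D := by positivity
        linarith
      linarith
    linarith
  have lhs_eq : (2:ℝ)^(30*(4*t*2)) * ((2:ℝ)^(t-61*D) * (2:ℝ)^D) =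
      (2:ℝ)^(30*(4*t*2) + ((t - 61*D) + D)) := by
    rw [← pow_add, ← pow_add]
  have rhs_eq : (2:ℝ)^t * (((2:ℝ)^30) ^ (4*t - D))^2 = (2:ℝ)^(t + 30*(4*t-D)*2) := by
    rw [← pow_mul, ← pow_mul, ← pow_add]
    congr 1
    ring
  rw [show (1073741825:ℝ) = 2^30+1 by norm_num, show (1073741824:ℝ) = 2^30 by norm_num]
  calc (((2 : ℝ) ^ 30 + 1) ^ (4 * t)) ^ 2 * 2 ^ D
      = (2:ℝ)^(30*(4*t*2)) * ((1 + ((2:ℝ)^30)⁻¹)^(4*t*2) * 2^D) := by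
        rw [hx, mul_pow, mul_pow, ← pow_mul, ← pow_mul]
        ring
    _ ≤ (2:ℝ)^(30*(4*t*2)) * ((2:ℝ)^(t-61*D) * (2:ℝ)^D) := by
        exact mul_le_mul_of_nonneg_left
          (mul_le_mul_of_nonneg_right main (by positivity)) (by positivity)
    _ = (2:ℝ)^t * (((2:ℝ)^30) ^ (4*t - D))^2 := by
        rw [lhs_eq, rhs_eq]
        congr 1
        omega

end SZaux4

/-- **Schulman–Zuckerman inner codes** (combinatorial content of
Lemma `SZ-code`): there are constants `βin ≥ 1` and `δin > 0` such that for
all sufficiently large `t` there is a code `Enc : {0,1}^t → {0,1}^{βin·t}`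
with decoder `Dec` that (1) uniquely decodes any received word within edit
distance `δin·2·βin·t` of a codeword, and (2) every contiguous substring of a
codeword of length `⌈2 log₂ t⌉` has fractional Hamming weight at least
`2/5`. -/
theorem schulman_zuckerman_inner_code :
    ∃ (βin : ℕ) (δin : ℝ), 1 ≤ βin ∧ 0 < δin ∧
      ∃ t₀ : ℕ, ∀ t : ℕ, t₀ ≤ t →
        ∃ (Enc : List Bool → List Bool) (Dec : List Bool → Option (List Bool)),
          (∀ x : List Bool, x.length = t → (Enc x).length = βin * t) ∧
          (∀ x : List Bool, x.length = t → ∀ w : List Bool,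
            (ED w (Enc x) : ℝ) ≤ δin * (2 * (βin * t)) → Dec w = some x) ∧
          (∀ x : List Bool, x.length = t → ∀ i : ℕ,
            i + ⌈(2 : ℝ) * Real.logb 2 t⌉₊ ≤ βin * t →
            (2 / 5 : ℝ) * (⌈(2 : ℝ) * Real.logb 2 t⌉₊ : ℝ) ≤
              ((((Enc x).drop i).take ⌈(2 : ℝ) * Real.logb 2 t⌉₊).count true : ℝ)) := by
  classical
  refine ⟨4, ((2:ℝ)^31)⁻¹, by norm_num, by positivity, 2^30, ?_⟩
  intro t ht
  have ht1 : 1 ≤ t := le_trans (by norm_num) ht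
  set D := t / 2^28 with hDdef
  -- the dense ambient set
  set S : Finset (List Bool) :=
    (Finset.univ : Finset (Fin (2*t) → Bool)).image
      (fun y => SZaux2.encBlocks (List.ofFn y)) with hSdef
  have hScard : S.card = 2 ^ (2*t) := by
    have hinj : Function.Injective (fun y : Fin (2*t) → Bool => SZaux2.encBlocks (List.ofFn y)) :=
      fun a b h => List.ofFn_injective (SZaux2.encBlocks_injective h)
    rw [hSdef, Finset.card_image_of_injective _ hinj, Finset.card_univ]
    simp
  have hSlen : ∀ v ∈ S, v.length = 4 * t := by
    intro v hv
    obtain ⟨y, -, rfl⟩ := Finset.mem_image.1 hv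
    rw [SZaux2.encBlocks_length, List.length_ofFn]
    omega
  have hSchain : ∀ v ∈ S, List.Chain' (fun a b => a = true ∨ b = true) v := by
    intro v hv
    obtain ⟨y, -, rfl⟩ := Finset.mem_image.1 hv
    exact SZaux2.chain'_encBlocks _
  -- the conflict relation
  set R : List Bool → List Bool → Prop := fun u v => ∃ w, ED w u ≤ D ∧ ED w v ≤ D with hRdef
  have hRsymm : ∀ u v, R u v → R v u := fun u v ⟨w, h1, h2⟩ => ⟨w, h2, h1⟩
  have hRrefl : ∀ u, R u u := fun u => ⟨u, by simp [SZaux.ED_self], by simp [SZaux.ED_self]⟩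
  set mc := ∑ j ∈ Finset.range (D+1), (4*t).choose j with hmcdef
  set Δ := mc * mc * 2^D with hΔdef
  have hmc1 : 1 ≤ mc := by
    have h0 : (4*t).choose 0 ≤ mc :=
      Finset.single_le_sum (f := fun j => (4*t).choose j) (fun i _ => Nat.zero_le _)
        (Finset.mem_range.2 (Nat.succ_pos D))
    simpa using h0
  have hΔ1 : 1 ≤ Δ := by
    have h2D : 1 ≤ 2^D := Nat.one_le_two_pow
    calc 1 = 1*1*1 := by norm_num
      _ ≤ mc*mc*2^D := Nat.mul_le_mul (Nat.mul_le_mul hmc1 hmc1) h2D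
  -- conflict counting
  have hconf : ∀ u ∈ S, (S.filter (R u)).card ≤ Δ := by
    intro u hu
    have hulen : u.length = 4*t := hSlen u hu
    have hsub : S.filter (R u) ⊆
        (((SZaux3.maskFinset (4*t) D) ×ˢ (SZaux3.maskFinset (4*t) D)) ×ˢ
          (SZaux3.listsLen D)).image
          (fun p => SZaux2.mergeIns p.1.2 (SZaux2.maskFilter p.1.1 u) p.2) := by
      intro v hv
      rw [Finset.mem_filter] at hv
      obtain ⟨hvS, w, hw1, hw2⟩ := hv
      have hvlen : v.length = 4*t := hSlen v hvS
      obtain ⟨c₁, hc₁w, hc₁u, hlen₁⟩ := SZaux.exists_common_sublist w u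
      obtain ⟨c₂, hc₂w, hc₂v, hlen₂⟩ := SZaux.exists_common_sublist w v
      obtain ⟨e, he₁, he₂, hlen₃⟩ := SZaux.exists_common_of_sublists w c₁ c₂ hc₁w hc₂w
      have heu : e.Sublist u := he₁.trans hc₁u
      have hev : e.Sublist v := he₂.trans hc₂v
      have helen : 4*t ≤ e.length + D := by
        rw [hulen] at hlen₁
        rw [hvlen] at hlen₂
        omega
      have helen_le : e.length ≤ 4*t := by
        have := heu.length_le
        omega
      obtain ⟨m₁, hm₁len, hm₁cnt, hm₁filter⟩ := SZaux2.sublist_exists_mask heu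
      obtain ⟨m₂, ins₀, hm₂len, hins₀len, hm₂cnt, hmerge⟩ := SZaux2.sublist_exists_merge hev
      rw [hulen] at hm₁cnt hm₁len
      rw [hvlen] at hm₂cnt hm₂len
      have hcnt1 : m₁.count false ≤ D := by omega
      have hcnt2 : m₂.count false ≤ D := by omega
      have hins₀D : ins₀.length ≤ D := by omega
      refine Finset.mem_image.2
        ⟨((m₁, m₂), ins₀ ++ List.replicate (D - ins₀.length) true), ?_, ?_⟩
      · refine Finset.mem_product.2 ⟨Finset.mem_product.2 ⟨?_, ?_⟩, ?_⟩
        · exact SZaux3.mem_maskFinset.2 ⟨hm₁len, hcnt1⟩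
        · exact SZaux3.mem_maskFinset.2 ⟨hm₂len, hcnt2⟩
        · apply SZaux3.mem_listsLen
          rw [List.length_append, List.length_replicate]
          omega
      · show SZaux2.mergeIns m₂ (SZaux2.maskFilter m₁ u) _ = v
        rw [hm₁filter, SZaux2.mergeIns_append m₂ e ins₀ _ (le_of_eq hins₀len.symm)]
        exact hmerge
    refine le_trans (Finset.card_le_card hsub) (le_trans Finset.card_image_le ?_)
    rw [Finset.card_product, Finset.card_product, SZaux3.card_listsLen, hΔdef, hmcdef]
    exact Nat.mul_le_mul
      (Nat.mul_le_mul (SZaux3.card_maskFinset _ _) (SZaux3.card_maskFinset _ _)) le_rfl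
  -- the bound Δ ≤ 2^t
  have hΔle : Δ ≤ 2 ^ t := by
    have hD4t : D ≤ 4*t := by
      have := Nat.div_le_self t (2^28)
      omega
    have hb : mc * (2^30)^(4*t - D) ≤ (2^30+1)^(4*t) :=
      SZaux3.sum_choose_bound (4*t) D (2^30) hD4t (by norm_num)
    have hpos : 0 < ((2^30 : ℕ)^(4*t - D))^2 := pow_pos (pow_pos (by norm_num) _) 2
    have step : Δ * ((2^30:ℕ)^(4*t - D))^2 ≤ 2^t * ((2^30:ℕ)^(4*t - D))^2 := by
      have h1 : Δ * ((2^30:ℕ)^(4*t-D))^2 = ((mc * (2^30)^(4*t-D))^2) * 2^D := by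
        rw [hΔdef]; ring
      rw [h1]
      calc ((mc * (2^30)^(4*t-D))^2) * 2^D
          ≤ ((2^30+1)^(4*t))^2 * 2^D :=
            Nat.mul_le_mul_right _ (Nat.pow_le_pow_left hb 2)
        _ ≤ 2^t * ((2^30:ℕ)^(4*t - D))^2 := SZaux4.numeric t ht1
    exact Nat.le_of_mul_le_mul_right step hpos
  have hkcard : 2^t * Δ ≤ S.card := by
    rw [hScard, two_mul, pow_add]
    exact Nat.mul_le_mul_left _ hΔle
  obtain ⟨T, hTS, hTcard, hTpair⟩ := SZaux3.greedy R hRsymm hRrefl Δ hΔ1 (2^t) S hconf hkcard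
  -- the encoder and decoder
  set F := SZaux3.listsLen t with hFdef
  have hFcard : F.card = T.card := by rw [hFdef, SZaux3.card_listsLen, hTcard]
  set eqv := Finset.equivOfCardEq hFcard with heqvdef
  set Enc : List Bool → List Bool :=
    fun x => if h : x ∈ F then (eqv ⟨x, h⟩ : List Bool) else [] with hEncdef
  have hEncT : ∀ x, (h : x ∈ F) → Enc x ∈ T := by
    intro x h
    rw [hEncdef]
    simp only [dif_pos h]
    exact (eqv ⟨x, h⟩).2
  have hEncInj : ∀ x, (hx : x ∈ F) → ∀ y, (hy : y ∈ F) → Enc x = Enc y → x = y := by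
    intro x hx y hy h
    rw [hEncdef] at h
    simp only [dif_pos hx, dif_pos hy] at h
    have h2 : eqv ⟨x, hx⟩ = eqv ⟨y, hy⟩ := Subtype.ext h
    have h3 := eqv.injective h2
    exact congrArg Subtype.val h3
  set Dec : List Bool → Option (List Bool) :=
    fun w => ((F.filter (fun x => ED w (Enc x) ≤ D)).toList).head? with hDecdef
  refine ⟨Enc, Dec, ?_, ?_, ?_⟩
  · -- length
    intro x hx
    exact hSlen _ (hTS (hEncT x (SZaux3.mem_listsLen hx)))
  · -- decoding
    intro x hx w hw
    have hxF : x ∈ F := SZaux3.mem_listsLen hx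
    have hwD : ED w (Enc x) ≤ D := by
      have hw2 : (ED w (Enc x) : ℝ) ≤ (t:ℝ)/2^28 := by
        refine le_trans hw (le_of_eq ?_)
        push_cast
        ring
      rw [le_div_iff₀ (by positivity : (0:ℝ) < 2^28)] at hw2
      rw [hDdef, Nat.le_div_iff_mul_le (by norm_num : 0 < 2^28)]
      exact_mod_cast hw2
    have hfilter : F.filter (fun y => ED w (Enc y) ≤ D) = {x} := by
      apply Finset.eq_singleton_iff_unique_mem.2
      refine ⟨Finset.mem_filter.2 ⟨hxF, hwD⟩, ?_⟩
      intro y hy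
      rw [Finset.mem_filter] at hy
      obtain ⟨hyF, hyD⟩ := hy
      have hEeq : Enc y = Enc x := by
        by_contra hne'
        exact hTpair _ (hEncT y hyF) _ (hEncT x hxF) hne' ⟨w, hyD, hwD⟩
      exact hEncInj y hyF x hxF hEeq
    rw [hDecdef]
    simp only []
    rw [hfilter, Finset.toList_singleton]
    rfl
  · -- window density
    intro x hx i hi
    have hxF : x ∈ F := SZaux3.mem_listsLen hx
    have hES : Enc x ∈ S := hTS (hEncT x hxF)
    have hlen : (Enc x).length = 4*t := hSlen _ hES
    set ℓ := ⌈(2 : ℝ) * Real.logb 2 t⌉₊ with hℓdef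
    set win := ((Enc x).drop i).take ℓ with hwindef
    have hwinlen : win.length = ℓ := by
      rw [hwindef, List.length_take, List.length_drop, hlen]
      omega
    have hchain : List.Chain' (fun a b => a = true ∨ b = true) win :=
      List.IsChain.take (List.IsChain.drop (hSchain _ hES) i) ℓ
    have hcount : win.length ≤ 2 * win.count true + 1 :=
      (SZaux2.chain'_count win hchain).1
    have hℓ5 : 5 ≤ ℓ := by
      have h8 : (8:ℝ) ≤ (t:ℝ) := by
        have : (8:ℕ) ≤ t := le_trans (by norm_num) ht
        exact_mod_cast this
      have hlogb : (3:ℝ) ≤ Real.logb 2 t := by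
        have h1 : Real.logb 2 ((2:ℝ)^(3:ℕ)) ≤ Real.logb 2 t := by
          apply Real.logb_le_logb_of_le (by norm_num) (by norm_num)
          norm_num
          linarith
        rw [Real.logb_pow, Real.logb_self_eq_one (by norm_num)] at h1
        push_cast at h1
        linarith
      have h5 : (5:ℝ) ≤ (2:ℝ) * Real.logb 2 t := by linarith
      have h6 : (5:ℝ) ≤ (ℓ : ℝ) := le_trans h5 (Nat.le_ceil _)
      exact_mod_cast h6
    have hfin : 2 * ℓ ≤ 5 * win.count true := by omega
    have hfinR : (2:ℝ) * ℓ ≤ 5 * (win.count true : ℝ) := by exact_mod_cast hfin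
    linarith
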